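/- Let τ_f, τ_s > 0 and G(s) = 1/(τ_f s + 1/(τ_s s + 1)). Then the phase condition Im G(jω) = 0 for ω > 0 has a solution if and only if τ_s > τ_f, in which case the unique positive solution is ω = (1/τ_s)·√((τ_s − τ_f)/τ_f). -/

import Mathlib

open Real

theorem relaxation_phase_crossing (τf τs : ℝ) (hτf : 0 < τf) (hτs : 0 < τs)
    (G : ℝ → ℂ)
    (hG : ∀ ω : ℝ, G ω = 1 / (τf * (Complex.I * ω) + 1 / (τs * (Complex.I * ω) + 1))) :
    ((∃ ω : ℝ, 0 < ω ∧ (G ω).im = 0) ↔ τf < τs) ∧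
    (∀ ω : ℝ, 0 < ω →
      ((G ω).im = 0 ↔ τf < τs ∧ ω = (1 / τs) * Real.sqrt ((τs - τf) / τf))) := by
  have key : ∀ ω : ℝ, 0 < ω →
      ((G ω).im = 0 ↔ τf < τs ∧ ω = (1 / τs) * Real.sqrt ((τs - τf) / τf)) := by
    intro ω hω
    set N : ℂ := ((τs * ω : ℝ) : ℂ) * Complex.I + 1 with hN
    set D : ℂ := ((1 - τf * τs * ω ^ 2 : ℝ) : ℂ) + ((τf * ω : ℝ) : ℂ) * Complex.I with hD
    have hWN : (τs * (Complex.I * ω) + 1 : ℂ) = N := by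
      rw [hN]; push_cast; ring
    have hw : (τs * (Complex.I * ω) + 1 : ℂ) ≠ 0 := by
      rw [hWN]
      intro h
      have := congrArg Complex.re h
      simp [hN] at this
    have hDim : D.im = τf * ω := by
      simp only [hD, Complex.add_im, Complex.ofReal_im, Complex.mul_im,
        Complex.ofReal_re, Complex.I_im, Complex.I_re]
      ring
    have hDre : D.re = 1 - τf * τs * ω ^ 2 := by
      simp only [hD, Complex.add_re, Complex.ofReal_re, Complex.mul_re,
        Complex.ofReal_im, Complex.I_re, Complex.I_im]
      ring
    have hDne : D ≠ 0 := by
      intro h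
      have : D.im = 0 := by rw [h]; simp
      rw [hDim] at this
      nlinarith
    have hNne : N ≠ 0 := hWN ▸ hw
    have hXD : (τf * (Complex.I * ω) + 1 / (τs * (Complex.I * ω) + 1) : ℂ) = D / N := by
      rw [hWN, eq_div_iff hNne, add_mul, div_mul_cancel₀ _ hNne]
      rw [hD, hN]
      apply Complex.ext <;>
        simp only [Complex.add_re, Complex.add_im, Complex.mul_re, Complex.mul_im,
          Complex.ofReal_re, Complex.ofReal_im, Complex.I_re, Complex.I_im,
          Complex.one_re, Complex.one_im] <;> ring
    have hGeq : G ω = N / D := by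
      rw [hG ω, hXD, one_div_div]
    have hNim : N.im = τs * ω := by simp [hN]
    have hNre : N.re = 1 := by simp [hN]
    have hnormSq : 0 < Complex.normSq D := Complex.normSq_pos.mpr hDne
    have him : (G ω).im = (τs * ω * (1 - τf * τs * ω ^ 2) - 1 * (τf * ω)) / Complex.normSq D := by
      rw [hGeq, Complex.div_im, hNim, hNre, hDim, hDre]
      ring
    rw [him, div_eq_zero_iff]
    have hr2 : ((1 / τs) * Real.sqrt ((τs - τf) / τf)) ^ 2 = (τs - τf) / (τf * τs ^ 2) ∨ ¬ τf < τs := by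
      by_cases hlt : τf < τs
      · left
        rw [mul_pow, Real.sq_sqrt (le_of_lt (div_pos (by linarith) hτf))]
        field_simp
      · right; exact hlt
    constructor
    · rintro (h | h)
      · have heq : τf * τs ^ 2 * ω ^ 2 = τs - τf := by nlinarith
        have hlt : τf < τs := by
          nlinarith [mul_pos (mul_pos hτf (pow_pos hτs 2)) (pow_pos hω 2)]
        refine ⟨hlt, ?_⟩
        rcases hr2 with hr2 | hc
        · set r := (1 / τs) * Real.sqrt ((τs - τf) / τf) with hrdef
          have hr0 : 0 < r := by
            have : 0 < Real.sqrt ((τs - τf) / τf) :=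
              Real.sqrt_pos.mpr (div_pos (by linarith) hτf)
            positivity
          have hsq : ω ^ 2 = r ^ 2 := by
            rw [hr2]
            field_simp
            nlinarith
          have : (ω - r) * (ω + r) = 0 := by nlinarith
          rcases mul_eq_zero.mp this with h' | h'
          · linarith
          · linarith
        · exact absurd hlt hc
      · exact absurd h hnormSq.ne'
    · rintro ⟨hlt, hωeq⟩
      left
      rcases hr2 with hr2 | hc
      · have h1 : ω ^ 2 = (τs - τf) / (τf * τs ^ 2) := by rw [hωeq, hr2]
        have h2 : τf * τs ^ 2 * ω ^ 2 = τs - τf := by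
          rw [h1]; field_simp
        nlinarith
      · exact absurd hlt hc
  refine ⟨?_, key⟩
  constructor
  · rintro ⟨ω, hω, him⟩
    exact ((key ω hω).mp him).1
  · intro hlt
    have hpos : 0 < (1 / τs) * Real.sqrt ((τs - τf) / τf) := by
      have : 0 < Real.sqrt ((τs - τf) / τf) :=
        Real.sqrt_pos.mpr (div_pos (by linarith) hτf)
      positivity
    exact ⟨_, hpos, (key _ hpos).mpr ⟨hlt, rfl⟩⟩
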